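/- An automorphism of finite order of a tree fixes a vertex or an edge (an inversion of an edge counts as fixing the edge). -/

import Mathlib

open SimpleGraph

namespace TitsAux5

variable {V : Type*} {G : SimpleGraph V}

lemma getVert_map' (F : G →g G) {u v : V} (p : G.Walk u v) (i : ℕ) :
    (p.map F).getVert i = F (p.getVert i) := by
  induction p generalizing i with
  | nil => simp [Walk.getVert]
  | cons h q ih =>
    cases i with
    | zero => rfl
    | succ i => simpa [Walk.getVert_cons_succ] using ih i

lemma IsPath.getVert_inj' {u v : V} {p : G.Walk u v} (hp : p.IsPath) :
    ∀ {i j : ℕ}, i ≤ p.length → j ≤ p.length → p.getVert i = p.getVert j → i = j := by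
  induction p with
  | nil => intro i j hi hj _; simp only [Walk.length_nil, Nat.le_zero] at hi hj; omega
  | cons h q ih =>
    rw [Walk.cons_isPath_iff] at hp
    intro i j hi hj hij
    match i, j with
    | 0, 0 => rfl
    | 0, j + 1 =>
      exfalso
      apply hp.2
      rw [Walk.mem_support_iff_exists_getVert]
      exact ⟨j, by simpa [Walk.getVert_cons_succ] using hij.symm,
        by simpa [Walk.length_cons] using hj⟩
    | i + 1, 0 =>
      exfalso
      apply hp.2
      rw [Walk.mem_support_iff_exists_getVert]
      exact ⟨i, by simpa [Walk.getVert_cons_succ] using hij,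
        by simpa [Walk.length_cons] using hi⟩
    | i + 1, j + 1 =>
      have := ih hp.1 (i := i) (j := j)
        (by simpa [Walk.length_cons] using hi)
        (by simpa [Walk.length_cons] using hj)
        (by simpa [Walk.getVert_cons_succ] using hij)
      omega

lemma isPath_of_noback (hac : G.IsAcyclic) :
    ∀ {u v : V} (w : G.Walk u v),
      (∀ i, i + 2 ≤ w.length → w.getVert i ≠ w.getVert (i + 2)) → w.IsPath := by
  classical
  intro u v w
  induction w with
  | nil => intro _; exact Walk.IsPath.nil
  | @cons u b v h q ih =>
    intro hnb
    have hq : q.IsPath := by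
      apply ih
      intro i hi
      have := hnb (i + 1) (by simp [Walk.length_cons]; omega)
      simpa [Walk.getVert_cons_succ] using this
    rw [Walk.cons_isPath_iff]
    refine ⟨hq, fun hu => ?_⟩
    obtain ⟨m, hm, hmle⟩ := Walk.mem_support_iff_exists_getVert.mp hu
    by_cases hq0 : q.length = 0
    · have hm0 : m = 0 := by omega
      subst hm0
      rw [Walk.getVert_zero] at hm
      exact h.ne hm.symm
    · have hep : (Walk.cons h.symm Walk.nil : G.Walk b u).IsPath := by
        simp [Walk.cons_isPath_iff, h.ne']
      have htp : (q.takeUntil u hu).IsPath := hq.takeUntil hu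
      have heq := hac.path_unique (⟨q.takeUntil u hu, htp⟩ : G.Path b u) ⟨_, hep⟩
      have htl : q.takeUntil u hu = Walk.cons h.symm Walk.nil := congrArg Subtype.val heq
      have ht1 : (q.takeUntil u hu).length = 1 := by rw [htl]; simp
      have hq1 : q.getVert 1 = u := by
        conv_lhs => rw [← q.take_spec hu]
        rw [Walk.getVert_append, ht1]
        simp
      have h02 := hnb 0 (by simp [Walk.length_cons]; omega)
      apply h02
      show u = (Walk.cons h q).getVert 2
      rw [Walk.getVert_cons_succ, hq1]

lemma not_closed_path {x : V} {w : G.Walk x x} (hw : w.IsPath) (hl : 0 < w.length) : False := by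
  cases w with
  | nil => simp at hl
  | cons h q =>
    rw [Walk.cons_isPath_iff] at hw
    exact hw.2 q.end_mem_support

/-- Concatenation of `j` copies of `p` translated by iterates of `F`. -/
def iterWalk (F : G →g G) : (j : ℕ) → {x : V} → (p : G.Walk x (F x)) → G.Walk x ((⇑F)^[j] x)
  | 0, _, _ => Walk.nil
  | j + 1, _x, p => p.append (iterWalk F j (p.map F))

lemma iterWalk_length (F : G →g G) : ∀ (j : ℕ) {x : V} (p : G.Walk x (F x)),
    (iterWalk F j p).length = j * p.length
  | 0, x, p => by simp [iterWalk]
  | j + 1, x, p => by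
    rw [show (iterWalk F (j + 1) p).length = p.length + (iterWalk F j (p.map F)).length from
      Walk.length_append _ _, iterWalk_length F j (p.map F), Walk.length_map]
    ring

lemma iterWalk_getVert (F : G →g G) : ∀ (j : ℕ) {x : V} (p : G.Walk x (F x)) (c i : ℕ),
    0 < p.length → c < j → i ≤ p.length →
    (iterWalk F j p).getVert (c * p.length + i) = (⇑F)^[c] (p.getVert i)
  | 0, x, p, c, i => by intro _ hc _; omega
  | j + 1, x, p, c, i => by
    intro hL hc hi
    rw [show (iterWalk F (j + 1) p).getVert (c * p.length + i) = if c * p.length + i < p.length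
      then p.getVert (c * p.length + i)
      else (iterWalk F j (p.map F)).getVert (c * p.length + i - p.length) from
      Walk.getVert_append _ _ _]
    rcases Nat.eq_zero_or_pos c with rfl | hc1
    · simp only [Nat.zero_mul, Nat.zero_add]
      by_cases hik : i < p.length
      · rw [if_pos hik]
        simp
      · have hieq : i = p.length := by omega
        subst hieq
        rw [if_neg (by omega), Nat.sub_self]
        rw [Walk.getVert_zero, Function.iterate_zero_apply, Walk.getVert_length]
    · obtain ⟨d, rfl⟩ : ∃ d, c = d + 1 := ⟨c - 1, by omega⟩
      have hge : p.length ≤ (d + 1) * p.length + i := by nlinarith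
      rw [if_neg (by omega)]
      have hidx : (d + 1) * p.length + i - p.length = d * (p.map F).length + i := by
        rw [Walk.length_map]; rw [add_mul, one_mul]; omega
      rw [hidx]
      rw [iterWalk_getVert F j (p.map F) d i (by rwa [Walk.length_map]) (by omega)
        (by rwa [Walk.length_map])]
      rw [getVert_map', Function.iterate_succ_apply]

lemma key (G : SimpleGraph V) (hac : G.IsAcyclic) (f : Equiv.Perm V)
    (hf : ∀ v w : V, G.Adj v w ↔ G.Adj (f v) (f w)) (n : ℕ) (hn : 0 < n)
    (hfn : f ^ n = 1) :
    ∀ (k : ℕ) (x : V) (p : G.Walk x (f x)), p.IsPath → p.length = k →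
      (∃ v : V, f v = v) ∨ (∃ v w : V, G.Adj v w ∧ f v = w ∧ f w = v) := by
  intro k
  induction k using Nat.strong_induction_on with
  | _ k ih =>
  intro x p hp hlen
  rcases Nat.eq_zero_or_pos k with rfl | hkpos
  · exact Or.inl ⟨x, (Walk.eq_of_length_eq_zero hlen).symm⟩
  by_cases hA : p.getVert (k - 1) = f (p.getVert 1)
  · rcases Nat.lt_or_ge k 2 with hk1 | hk2
    · -- k = 1 : inversion of the edge x -- f x
      have hk : k = 1 := by omega
      subst hk
      have hadj : G.Adj x (f x) := by
        have := p.adj_getVert_succ (i := 0) (by omega)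
        rw [Walk.getVert_zero] at this
        have h1 : p.getVert 1 = f x := by
          conv_lhs => rw [← hlen]
          exact p.getVert_length
        rwa [h1] at this
      refine Or.inr ⟨x, f x, hadj, rfl, ?_⟩
      have h0 : p.getVert 0 = x := p.getVert_zero
      have h1 : p.getVert 1 = f x := by
        conv_lhs => rw [← hlen]
        exact p.getVert_length
      rw [Nat.sub_self, h0, h1] at hA
      exact hA.symm
    · -- k ≥ 2 : shorten
      have hpnil : ¬ p.Nil := by rw [Walk.not_nil_iff_lt_length]; omega
      have hq : p.tail.IsPath := hp.tail
      have hqlen : p.tail.length = k - 1 := by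
        have := Walk.length_tail_add_one hpnil; omega
      have hrnil : ¬ p.tail.reverse.Nil := by
        rw [Walk.not_nil_iff_lt_length, Walk.length_reverse]; omega
      have hs : p.tail.reverse.tail.IsPath := hq.reverse.tail
      have hslen : p.tail.reverse.tail.length = k - 2 := by
        have := Walk.length_tail_add_one hrnil
        rw [Walk.length_reverse] at this
        omega
      have hr1 : p.tail.reverse.getVert 1 = f (p.getVert 1) := by
        rw [Walk.getVert_reverse, Walk.getVert_tail, hqlen]
        have : k - 1 - 1 + 1 = k - 1 := by omega
        rw [this]
        exact hA
      -- walk from p.getVert 1 to f (p.getVert 1) of length k - 2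
      refine ih (k - 2) (by omega) (p.getVert 1)
        ((p.tail.reverse.tail.reverse).copy rfl hr1) ?_ ?_
      · rw [Walk.isPath_copy]; exact hs.reverse
      · rw [Walk.length_copy, Walk.length_reverse, hslen]
  · -- no fold : build a long closed path, contradiction
    exfalso
    set F : G →g G := ⟨(f : V → V), fun {a b} h => (hf a b).mp h⟩ with hFdef
    have hFc : ⇑F = ⇑f := rfl
    have hpF : G.Walk x (F x) := p
    have hL : 0 < p.length := by omega
    have hFx : (⇑F)^[n] x = x := by
      rw [hFc, ← Equiv.Perm.coe_pow, hfn]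
      simp
    have hWnb : ∀ m, m + 2 ≤ (iterWalk F n (p : G.Walk x (F x))).length →
        (iterWalk F n (p : G.Walk x (F x))).getVert m ≠
          (iterWalk F n (p : G.Walk x (F x))).getVert (m + 2) := by
      intro m hm
      rw [iterWalk_length] at hm
      obtain ⟨c, i, hiL, hcn, rfl⟩ : ∃ c i, i < p.length ∧ c < n ∧ m = c * p.length + i := by
        refine ⟨m / p.length, m % p.length, Nat.mod_lt _ hL, ?_, ?_⟩
        · rw [Nat.div_lt_iff_lt_mul hL]; omega
        · rw [Nat.mul_comm]; exact (Nat.div_add_mod m p.length).symm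
      have hinj : Function.Injective ((⇑F)^[c]) := by
        rw [hFc]; exact f.injective.iterate _
      by_cases hcross : i + 2 ≤ p.length
      · -- within one segment
        rw [iterWalk_getVert F n p c i hL hcn (by omega)]
        rw [show c * p.length + i + 2 = c * p.length + (i + 2) by omega]
        rw [iterWalk_getVert F n p c (i + 2) hL hcn hcross]
        intro hcontra
        have := IsPath.getVert_inj' hp (by omega) (by omega) (hinj hcontra)
        omega
      · -- crossing a junction
        have hi : i = p.length - 1 := by omega
        subst hi
        have h2 : c * p.length + (p.length - 1) + 2 = (c + 1) * p.length + 1 := by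
          rw [add_mul, one_mul]; omega
        have hc1 : c + 1 < n := by
          have hlt : (c + 1) * p.length < n * p.length := by omega
          exact lt_of_mul_lt_mul_right hlt (Nat.zero_le _)
        rw [iterWalk_getVert F n p c (p.length - 1) hL hcn (by omega)]
        rw [h2, iterWalk_getVert F n p (c + 1) 1 hL hc1 (by omega),
          Function.iterate_succ_apply]
        intro hcontra
        have hcc := hinj hcontra
        rw [hlen] at hcc
        exact hA hcc
    have hWpath : ((iterWalk F n (p : G.Walk x (F x))).copy rfl hFx).IsPath := by
      apply isPath_of_noback hac
      intro i hi
      rw [Walk.length_copy] at hi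
      rw [Walk.getVert_copy, Walk.getVert_copy]
      exact hWnb i hi
    refine not_closed_path hWpath ?_
    rw [Walk.length_copy, iterWalk_length]
    have : 0 < p.length := hL
    positivity

end TitsAux5

/-- Tits: an automorphism of finite order of a tree fixes a vertex or an
edge (possibly inverting the edge). -/
theorem stmt_5 {V : Type*} (G : SimpleGraph V) (hconn : G.Connected)
    (hacyclic : G.IsAcyclic) (f : Equiv.Perm V)
    (hf : ∀ v w : V, G.Adj v w ↔ G.Adj (f v) (f w))
    (hord : IsOfFinOrder f) :
    (∃ v : V, f v = v) ∨ (∃ v w : V, G.Adj v w ∧ f v = w ∧ f w = v) := by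
  classical
  obtain ⟨x⟩ := hconn.nonempty
  obtain ⟨w⟩ := hconn.preconnected x (f x)
  exact TitsAux5.key G hacyclic f hf (orderOf f) hord.orderOf_pos
    (pow_orderOf_eq_one f) w.bypass.length x w.bypass w.bypass_isPath rfl
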